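/- arXiv:2605.02961 — 4 statements merged into one kernel-verified Lean document; each statement's English description precedes it below -/
import Mathlib

section
/- Fix d ≥ 1, a real κ > 0, real d×d matrices β (symmetric) and σ, a vector ν ∈ ℝ^d, and a fixed vector y ∈ ℝ^d. Suppose that on an open time interval I, differentiable matrix-valued functions A_t (symmetric for each t), B_t, C_t, vector-valued functions θx_t, θy_t, and a scalar function ζ_t satisfy the ODE system: A'_t = κ·A_t·A_t − (σᵀ·A_t + A_t·σ) − β; B'_t = κ·A_t·B_t − σᵀ·B_t; C'_t = κ·B_tᵀ·B_t; θx'_t = (κ·A_t − σᵀ)·θx_t − β·ν; θy'_t = −κ·B_tᵀ·θx_t; ζ'_t = (κ/2)·tr(A_t) + (1/2)·⟨ν, β·ν⟩ − (κ/2)·‖θx_t‖². Then the function G(t,x) := exp(−(1/2)⟨x, A_t·x⟩ + ⟨x, B_t·y⟩ − (1/2)⟨y, C_t·y⟩ + ⟨θx_t, x⟩ + ⟨θy_t, y⟩ + ζ_t) satisfies the backward linear PDE −∂_t G(t,x) + V(x)·G(t,x) = ⟨σ·x, ∇_x G(t,x)⟩ + (κ/2)·Δ_x G(t,x) for all t ∈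 I and all x ∈ ℝ^d, where V(x) = (1/2)⟨x − ν, β·(x − ν)⟩. -/
open scoped RealInnerProductSpace

/-- Spatial Laplacian: sum of second partial derivatives in the coordinate directions. -/
noncomputable def spatialLaplacian {d : ℕ} (f : EuclideanSpace ℝ (Fin d) → ℝ)
    (x : EuclideanSpace ℝ (Fin d)) : ℝ :=
  ∑ i, fderiv ℝ (fun y => fderiv ℝ f y (EuclideanSpace.single i 1)) x (EuclideanSpace.single i 1)

/-- Matrix-vector multiplication, viewed as acting on Euclidean space. -/
def mvE {d : ℕ} (M : Matrix (Fin d) (Fin d) ℝ) (v : EuclideanSpace ℝ (Fin d)) :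
    EuclideanSpace ℝ (Fin d) := WithLp.toLp 2 (M.mulVec v)

variable {d : ℕ}

lemma inner_eq_sum (u v : EuclideanSpace ℝ (Fin d)) : ⟪u, v⟫ = ∑ i, u i * v i := by
  simp [PiLp.inner_apply, RCLike.inner_apply, conj_trivial]
  exact Finset.sum_congr rfl fun i _ => mul_comm _ _

lemma mvE_apply (M : Matrix (Fin d) (Fin d) ℝ) (v : EuclideanSpace ℝ (Fin d)) (i : Fin d) :
    mvE M v i = ∑ j, M i j * v j := by
  simp [mvE, Matrix.mulVec, dotProduct]

lemma inner_mvE_left (M : Matrix (Fin d) (Fin d) ℝ) (u v : EuclideanSpace ℝ (Fin d)) :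
    ⟪mvE M u, v⟫ = ⟪u, mvE M.transpose v⟫ := by
  simp only [inner_eq_sum, mvE_apply, Finset.sum_mul, Finset.mul_sum, Matrix.transpose_apply]
  rw [Finset.sum_comm]
  exact Finset.sum_congr rfl fun i _ => Finset.sum_congr rfl fun j _ => by ring

lemma mvE_clm (M : Matrix (Fin d) (Fin d) ℝ) (v : EuclideanSpace ℝ (Fin d)) :
    Matrix.toEuclideanCLM (𝕜 := ℝ) M v = mvE M v := rfl

lemma hasGradientAt_phi (M : Matrix (Fin d) (Fin d) ℝ) (hM : M.IsSymm)
    (c : EuclideanSpace ℝ (Fin d)) (k : ℝ) (x : EuclideanSpace ℝ (Fin d)) :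
    HasGradientAt (fun v : EuclideanSpace ℝ (Fin d) =>
      -(1/2) * ⟪v, mvE M v⟫ + ⟪c, v⟫ + k) (c - mvE M x) x := by
  set T := Matrix.toEuclideanCLM (𝕜 := ℝ) M with hT
  have hq : HasFDerivAt (fun v : EuclideanSpace ℝ (Fin d) => ⟪v, T v⟫)
      ((fderivInnerCLM ℝ (x, T x)).comp ((ContinuousLinearMap.id ℝ _).prod T)) x :=
    (hasFDerivAt_id x).inner ℝ (T.hasFDerivAt)
  have hlin : HasFDerivAt (fun v : EuclideanSpace ℝ (Fin d) => ⟪c, v⟫)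
      (innerSL ℝ c) x := (innerSL ℝ c).hasFDerivAt
  have hφ := ((hq.const_mul (-(1/2))).add hlin).add_const k
  rw [hasGradientAt_iff_hasFDerivAt]
  refine hφ.congr_fderiv (Eq.symm ?_)
  apply ContinuousLinearMap.ext; intro v
  have hsymm : ⟪x, mvE M v⟫ = ⟪mvE M x, v⟫ := by
    rw [inner_mvE_left, hM.eq]
  simp only [InnerProductSpace.toDual_apply_apply, ContinuousLinearMap.add_apply,
    ContinuousLinearMap.smul_apply, ContinuousLinearMap.comp_apply,
    ContinuousLinearMap.prod_apply, ContinuousLinearMap.id_apply,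
    fderivInnerCLM_apply, innerSL_apply_apply, smul_eq_mul]
  simp only [hT, mvE_clm]
  rw [inner_sub_left, hsymm, real_inner_comm (mvE M x) v]
  ring

lemma hasGradientAt_G (M : Matrix (Fin d) (Fin d) ℝ) (hM : M.IsSymm)
    (c : EuclideanSpace ℝ (Fin d)) (k : ℝ) (x : EuclideanSpace ℝ (Fin d)) :
    HasGradientAt (fun v : EuclideanSpace ℝ (Fin d) =>
        Real.exp (-(1/2) * ⟪v, mvE M v⟫ + ⟪c, v⟫ + k))
      (Real.exp (-(1/2) * ⟪x, mvE M x⟫ + ⟪c, x⟫ + k) • (c - mvE M x)) x := by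
  have h := (hasGradientAt_phi M hM c k x).hasFDerivAt.exp
  rw [hasGradientAt_iff_hasFDerivAt]
  refine h.congr_fderiv (Eq.symm ?_)
  apply ContinuousLinearMap.ext; intro v
  simp [InnerProductSpace.toDual_apply_apply, real_inner_smul_left]

lemma inner_single (w : EuclideanSpace ℝ (Fin d)) (i : Fin d) :
    ⟪w, EuclideanSpace.single i (1:ℝ)⟫ = w i := by
  rw [EuclideanSpace.inner_single_right]; simp

lemma mvE_single (M : Matrix (Fin d) (Fin d) ℝ) (i j : Fin d) :
    mvE M (EuclideanSpace.single i (1:ℝ)) j = M j i := by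
  simp [mvE_apply, EuclideanSpace.single_apply]

lemma laplacian_G (M : Matrix (Fin d) (Fin d) ℝ) (hM : M.IsSymm)
    (c : EuclideanSpace ℝ (Fin d)) (k : ℝ) (x : EuclideanSpace ℝ (Fin d)) :
    spatialLaplacian (fun v : EuclideanSpace ℝ (Fin d) =>
        Real.exp (-(1/2) * ⟪v, mvE M v⟫ + ⟪c, v⟫ + k)) x
      = Real.exp (-(1/2) * ⟪x, mvE M x⟫ + ⟪c, x⟫ + k)
          * (⟪c - mvE M x, c - mvE M x⟫ - M.trace) := by
  set f : EuclideanSpace ℝ (Fin d) → ℝ := fun v =>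
      Real.exp (-(1/2) * ⟪v, mvE M v⟫ + ⟪c, v⟫ + k) with hf
  set T := Matrix.toEuclideanCLM (𝕜 := ℝ) M with hT
  have hfd : ∀ z i, fderiv ℝ f z (EuclideanSpace.single i (1:ℝ))
      = f z * (c i - mvE M z i) := by
    intro z i
    rw [(hasGradientAt_G M hM c k z).hasFDerivAt.fderiv, InnerProductSpace.toDual_apply_apply,
      real_inner_smul_left, inner_single]
    simp [hf]
  unfold spatialLaplacian
  have key : ∀ i : Fin d, fderiv ℝ (fun z => fderiv ℝ f z (EuclideanSpace.single i (1:ℝ))) x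
      (EuclideanSpace.single i (1:ℝ)) = f x * ((c i - mvE M x i)^2 - M i i) := by
    intro i
    have hfun : (fun z => fderiv ℝ f z (EuclideanSpace.single i (1:ℝ)))
        = fun z => f z * (c i - mvE M z i) := funext fun z => hfd z i
    rw [hfun]
    have hexp : HasFDerivAt f
        (f x • (InnerProductSpace.toDual ℝ _ (c - mvE M x))) x :=
      (hasGradientAt_phi M hM c k x).hasFDerivAt.exp
    have hh : HasFDerivAt (fun z : EuclideanSpace ℝ (Fin d) => c i - mvE M z i)
        ((0 : EuclideanSpace ℝ (Fin d) →L[ℝ] ℝ) - (EuclideanSpace.proj i).comp T) x :=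
      (hasFDerivAt_const (c i) x).sub (((EuclideanSpace.proj i).comp T).hasFDerivAt)
    have := (hexp.fun_mul hh).fderiv
    rw [this]
    simp only [ContinuousLinearMap.add_apply, ContinuousLinearMap.smul_apply,
      ContinuousLinearMap.sub_apply, ContinuousLinearMap.zero_apply,
      ContinuousLinearMap.comp_apply, smul_eq_mul,
      InnerProductSpace.toDual_apply_apply, PiLp.proj_apply]
    rw [show (T (EuclideanSpace.single i (1:ℝ))) i = M i i by
      rw [hT, mvE_clm, mvE_single]]
    rw [inner_single]
    simp only [PiLp.sub_apply]
    ring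
  simp only [key]
  rw [show Real.exp (-(1/2) * ⟪x, mvE M x⟫ + ⟪c, x⟫ + k) = f x from rfl]
  rw [inner_eq_sum (c - mvE M x), Matrix.trace]
  simp only [Matrix.diag_apply, PiLp.sub_apply]
  rw [mul_sub, Finset.mul_sum, Finset.mul_sum, ← Finset.sum_sub_distrib]
  exact Finset.sum_congr rfl fun i _ => by ring
section TimeLemmas
variable {d : ℕ}

lemma inner_mvE_right (M : Matrix (Fin d) (Fin d) ℝ) (u v : EuclideanSpace ℝ (Fin d)) :
    ⟪u, mvE M v⟫ = ⟪mvE M.transpose u, v⟫ := by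
  rw [inner_mvE_left, Matrix.transpose_transpose]

lemma mvE_add (M N : Matrix (Fin d) (Fin d) ℝ) (v : EuclideanSpace ℝ (Fin d)) :
    mvE (M + N) v = mvE M v + mvE N v := by
  ext i
  simp [mvE_apply, add_mul, Finset.sum_add_distrib]

lemma mvE_sub (M N : Matrix (Fin d) (Fin d) ℝ) (v : EuclideanSpace ℝ (Fin d)) :
    mvE (M - N) v = mvE M v - mvE N v := by
  ext i
  simp [mvE_apply, sub_mul, Finset.sum_sub_distrib]

lemma mvE_smul (r : ℝ) (M : Matrix (Fin d) (Fin d) ℝ) (v : EuclideanSpace ℝ (Fin d)) :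
    mvE (r • M) v = r • mvE M v := by
  ext i
  simp [mvE_apply, Finset.mul_sum, mul_assoc]

lemma mvE_mul (M N : Matrix (Fin d) (Fin d) ℝ) (v : EuclideanSpace ℝ (Fin d)) :
    mvE (M * N) v = mvE M (mvE N v) := by
  ext i
  simp only [mvE_apply, Matrix.mul_apply, Finset.sum_mul, Finset.mul_sum]
  rw [Finset.sum_comm]
  exact Finset.sum_congr rfl fun j _ => Finset.sum_congr rfl fun l _ => by ring

lemma mvE_vec_sub (M : Matrix (Fin d) (Fin d) ℝ) (v w : EuclideanSpace ℝ (Fin d)) :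
    mvE M (v - w) = mvE M v - mvE M w := by
  ext i
  simp [mvE_apply, mul_sub, Finset.sum_sub_distrib]

lemma hasDerivAt_inner_quad (A : ℝ → Matrix (Fin d) (Fin d) ℝ) (A' : Matrix (Fin d) (Fin d) ℝ)
    (u v : EuclideanSpace ℝ (Fin d)) (t : ℝ)
    (h : ∀ i j, HasDerivAt (fun s => A s i j) (A' i j) t) :
    HasDerivAt (fun s => ⟪u, mvE (A s) v⟫) ⟪u, mvE A' v⟫ t := by
  have key : HasDerivAt (fun s => ∑ i, u i * ∑ j, A s i j * v j)
      (∑ i, u i * ∑ j, A' i j * v j) t :=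
    HasDerivAt.fun_sum fun i _ =>
      HasDerivAt.const_mul (u i) (HasDerivAt.fun_sum fun j _ => (h i j).mul_const (v j))
  simpa only [inner_eq_sum, mvE_apply] using key

lemma hasDerivAt_inner_vec (θ : ℝ → EuclideanSpace ℝ (Fin d)) (θ' w : EuclideanSpace ℝ (Fin d))
    (t : ℝ) (h : HasDerivAt θ θ' t) :
    HasDerivAt (fun s => ⟪θ s, w⟫) ⟪θ', w⟫ t := by
  have hcomp : ∀ i, HasDerivAt (fun s => θ s i) (θ' i) t := fun i => by
    exact
      ((EuclideanSpace.proj i : EuclideanSpace ℝ (Fin d) →L[ℝ] ℝ).hasFDerivAt.comp_hasDerivAt t h)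
  have key : HasDerivAt (fun s => ∑ i, θ s i * w i) (∑ i, θ' i * w i) t :=
    HasDerivAt.fun_sum fun i _ => (hcomp i).mul_const (w i)
  simpa only [inner_eq_sum] using key

end TimeLemmas

/-- If the coefficient functions of the Gaussian ansatz satisfy the
backward coefficient ODE system, then the ansatz
`G(t,x) = exp(−½⟨x,Aₜx⟩ + ⟨x,Bₜy⟩ − ½⟨y,Cₜy⟩ + ⟨θxₜ,x⟩ + ⟨θyₜ,y⟩ + ζₜ)`
solves the backward linear PDE `−∂ₜG + V·G = ⟨σx, ∇ₓG⟩ + (κ/2)·ΔₓG` on `I × ℝᵈ`,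
where `V(x) = ½⟨x−ν, β(x−ν)⟩`. -/
theorem gaussian_ansatz_solves_backward_pde
    (d : ℕ) (hd : 1 ≤ d) (κ : ℝ) (hκ : 0 < κ)
    (β σ : Matrix (Fin d) (Fin d) ℝ) (hβ : β.IsSymm)
    (ν y : EuclideanSpace ℝ (Fin d))
    (I : Set ℝ) (hIopen : IsOpen I) (hIord : I.OrdConnected)
    (A B C : ℝ → Matrix (Fin d) (Fin d) ℝ)
    (θx θy : ℝ → EuclideanSpace ℝ (Fin d))
    (ζ : ℝ → ℝ)
    (hAsymm : ∀ t ∈ I, (A t).IsSymm)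
    (hA : ∀ t ∈ I, ∀ i j, HasDerivAt (fun s => A s i j)
      ((κ • (A t * A t) - (σ.transpose * A t + A t * σ) - β) i j) t)
    (hB : ∀ t ∈ I, ∀ i j, HasDerivAt (fun s => B s i j)
      ((κ • (A t * B t) - σ.transpose * B t) i j) t)
    (hC : ∀ t ∈ I, ∀ i j, HasDerivAt (fun s => C s i j)
      ((κ • ((B t).transpose * B t)) i j) t)
    (hθx : ∀ t ∈ I, HasDerivAt θx (mvE (κ • A t - σ.transpose) (θx t) - mvE β ν) t)
    (hθy : ∀ t ∈ I, HasDerivAt θy (-(κ • mvE (B t).transpose (θx t))) t)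
    (hζ : ∀ t ∈ I, HasDerivAt ζ
      (κ / 2 * (A t).trace + 1 / 2 * ⟪ν, mvE β ν⟫ - κ / 2 * ‖θx t‖ ^ 2) t)
    (V : EuclideanSpace ℝ (Fin d) → ℝ)
    (hV : V = fun x => 1 / 2 * ⟪x - ν, mvE β (x - ν)⟫)
    (G : ℝ → EuclideanSpace ℝ (Fin d) → ℝ)
    (hG : G = fun t x => Real.exp
      (-(1 / 2) * ⟪x, mvE (A t) x⟫ + ⟪x, mvE (B t) y⟫ - 1 / 2 * ⟪y, mvE (C t) y⟫
        + ⟪θx t, x⟫ + ⟪θy t, y⟫ + ζ t)) :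
    ∀ t ∈ I, ∀ x : EuclideanSpace ℝ (Fin d),
      -(deriv (fun s => G s x) t) + V x * G t x
        = ⟪mvE σ x, gradient (G t) x⟫ + κ / 2 * spatialLaplacian (G t) x := by
  intro t ht x
  have hAs := hAsymm t ht
  -- canonical spatial form
  have hfun : (fun v : EuclideanSpace ℝ (Fin d) => Real.exp
      (-(1 / 2) * ⟪v, mvE (A t) v⟫ + ⟪v, mvE (B t) y⟫ - 1 / 2 * ⟪y, mvE (C t) y⟫
        + ⟪θx t, v⟫ + ⟪θy t, y⟫ + ζ t))
      = fun v : EuclideanSpace ℝ (Fin d) => Real.exp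
      (-(1/2) * ⟪v, mvE (A t) v⟫ + ⟪mvE (B t) y + θx t, v⟫
        + (-(1/2) * ⟪y, mvE (C t) y⟫ + ⟪θy t, y⟫ + ζ t)) := by
    funext v
    congr 1
    rw [inner_add_left, real_inner_comm (mvE (B t) y) v]
    ring
  -- time derivative
  have p1 := hasDerivAt_inner_quad A _ x x t (hA t ht)
  have p2 := hasDerivAt_inner_quad B _ x y t (hB t ht)
  have p3 := hasDerivAt_inner_quad C _ y y t (hC t ht)
  have p4 := hasDerivAt_inner_vec θx _ x t (hθx t ht)
  have p5 := hasDerivAt_inner_vec θy _ y t (hθy t ht)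
  have p6 := hζ t ht
  have hexp := ((((((p1.const_mul (-(1/2))).fun_add p2).fun_sub
      (p3.const_mul (1/2))).fun_add p4).fun_add p5).fun_add p6).exp
  have hderiv := hexp.deriv
  simp only [hG, hV]
  rw [hfun]
  rw [(hasGradientAt_G (A t) hAs (mvE (B t) y + θx t)
      (-(1/2) * ⟪y, mvE (C t) y⟫ + ⟪θy t, y⟫ + ζ t) x).gradient]
  rw [laplacian_G (A t) hAs (mvE (B t) y + θx t)
      (-(1/2) * ⟪y, mvE (C t) y⟫ + ⟪θy t, y⟫ + ζ t) x]
  rw [real_inner_smul_right]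
  rw [hderiv]
  have hGx : Real.exp
      (-(1 / 2) * ⟪x, mvE (A t) x⟫ + ⟪x, mvE (B t) y⟫ - 1 / 2 * ⟪y, mvE (C t) y⟫
        + ⟪θx t, x⟫ + ⟪θy t, y⟫ + ζ t)
      = Real.exp (-(1/2) * ⟪x, mvE (A t) x⟫ + ⟪mvE (B t) y + θx t, x⟫
        + (-(1/2) * ⟪y, mvE (C t) y⟫ + ⟪θy t, y⟫ + ζ t)) := congrFun hfun x
  rw [hGx]
  -- moving lemmas
  have hA_move : ∀ w v : EuclideanSpace ℝ (Fin d), ⟪w, mvE (A t) v⟫ = ⟪mvE (A t) w, v⟫ :=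
    fun w v => by rw [inner_mvE_right, hAs.eq]
  have hβ_move : ∀ w v : EuclideanSpace ℝ (Fin d), ⟪w, mvE β v⟫ = ⟪mvE β w, v⟫ :=
    fun w v => by rw [inner_mvE_right, hβ.eq]
  have hσT_move : ∀ w v : EuclideanSpace ℝ (Fin d), ⟪w, mvE σ.transpose v⟫ = ⟪mvE σ w, v⟫ :=
    fun w v => by rw [inner_mvE_right, Matrix.transpose_transpose]
  -- scalar expansions
  have e1 : ⟪x, mvE (κ • (A t * A t) - (σ.transpose * A t + A t * σ) - β) x⟫
      = κ * ⟪mvE (A t) x, mvE (A t) x⟫ - 2 * ⟪mvE σ x, mvE (A t) x⟫ - ⟪x, mvE β x⟫ := by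
    rw [mvE_sub, mvE_sub, mvE_add, mvE_smul, mvE_mul, mvE_mul, mvE_mul,
      inner_sub_right, inner_sub_right, inner_add_right, real_inner_smul_right,
      hA_move x (mvE (A t) x), hσT_move x (mvE (A t) x), hA_move x (mvE σ x),
      real_inner_comm (mvE (A t) x) (mvE σ x)]
    ring
  have e2 : ⟪x, mvE (κ • (A t * B t) - σ.transpose * B t) y⟫
      = κ * ⟪mvE (A t) x, mvE (B t) y⟫ - ⟪mvE σ x, mvE (B t) y⟫ := by
    rw [mvE_sub, mvE_smul, mvE_mul, mvE_mul, inner_sub_right, real_inner_smul_right,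
      hA_move x (mvE (B t) y), hσT_move x (mvE (B t) y)]
  have e3 : ⟪y, mvE (κ • ((B t).transpose * B t)) y⟫
      = κ * ⟪mvE (B t) y, mvE (B t) y⟫ := by
    rw [mvE_smul, mvE_mul, real_inner_smul_right, inner_mvE_right, Matrix.transpose_transpose]
  have e4 : ⟪mvE (κ • A t - σ.transpose) (θx t) - mvE β ν, x⟫
      = κ * ⟪θx t, mvE (A t) x⟫ - ⟪θx t, mvE σ x⟫ - ⟪mvE β ν, x⟫ := by
    rw [inner_sub_left, mvE_sub, inner_sub_left, mvE_smul, real_inner_smul_left,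
      inner_mvE_left, hAs.eq, inner_mvE_left, Matrix.transpose_transpose]
  have e5 : ⟪-(κ • mvE (B t).transpose (θx t)), y⟫ = -(κ * ⟪θx t, mvE (B t) y⟫) := by
    rw [inner_neg_left, real_inner_smul_left, inner_mvE_left, Matrix.transpose_transpose]
  have e6 : ‖θx t‖ ^ 2 = ⟪θx t, θx t⟫ := (real_inner_self_eq_norm_sq _).symm
  have e7 : ⟪x - ν, mvE β (x - ν)⟫
      = ⟪x, mvE β x⟫ - 2 * ⟪mvE β ν, x⟫ + ⟪ν, mvE β ν⟫ := by
    rw [mvE_vec_sub, inner_sub_left, inner_sub_right, inner_sub_right,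
      hβ_move ν x, real_inner_comm (mvE β ν) x]
    ring
  have e8 : ⟪mvE σ x, mvE (B t) y + θx t - mvE (A t) x⟫
      = ⟪mvE σ x, mvE (B t) y⟫ + ⟪θx t, mvE σ x⟫ - ⟪mvE σ x, mvE (A t) x⟫ := by
    rw [inner_sub_right, inner_add_right, real_inner_comm (mvE σ x) (θx t)]
  have e9 : ⟪mvE (B t) y + θx t - mvE (A t) x, mvE (B t) y + θx t - mvE (A t) x⟫
      = ⟪mvE (B t) y, mvE (B t) y⟫ + ⟪θx t, θx t⟫ + ⟪mvE (A t) x, mvE (A t) x⟫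
        + 2 * ⟪θx t, mvE (B t) y⟫ - 2 * ⟪mvE (A t) x, mvE (B t) y⟫
        - 2 * ⟪θx t, mvE (A t) x⟫ := by
    simp only [inner_sub_left, inner_sub_right, inner_add_left, inner_add_right]
    rw [real_inner_comm (mvE (B t) y) (θx t), real_inner_comm (mvE (B t) y) (mvE (A t) x),
      real_inner_comm (θx t) (mvE (A t) x)]
    ring
  rw [e1, e2, e3, e4, e5, e6, e7, e8, e9]
  ring
end

section
/- Let σ, β, A₁ be real d×d matrices and κ ∈ ℝ. Let H be the 2d×2d block matrix with blocks H = [[σ, −κ·I],[−β, −σᵀ]], and for τ ∈ ℝ write exp(−τ·H) in block form with d×d blocks Φ₁₁(τ), Φ₁₂(τ), Φ₂₁(τ), Φ₂₂(τ). Define X(τ) = Φ₁₁(τ) + Φ₁₂(τ)·A₁ and Y(τ) = Φ₂₁(τ) + Φ₂₂(τ)·A₁. Then on any interval containing 0 on which X(τ) is invertible, the function A(τ) := Y(τ)·X(τ)⁻¹ is differentiable, satisfies A(0) = A₁, and solves the matrix Riccati equation A'(τ) = β + σᵀ·A(τ) + A(τ)·σ − κ·A(τ)·A(τ). -/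
open Matrix NormedSpace

namespace RiccatiAux

attribute [local instance] Matrix.linftyOpNormedAddCommGroup Matrix.linftyOpNormedSpace
  Matrix.linftyOpNormedRing Matrix.linftyOpNormedAlgebra

lemma hasDerivAt_linear {E F : Type*} [NormedAddCommGroup E] [NormedSpace ℝ E]
    [NormedAddCommGroup F] [NormedSpace ℝ F] [FiniteDimensional ℝ E]
    (L : E →ₗ[ℝ] F) {f : ℝ → E} {f' : E} {τ : ℝ} (h : HasDerivAt f f' τ) :
    HasDerivAt (fun u => L (f u)) (L f') τ := by
  simpa [Function.comp_def] using (L.toContinuousLinearMap.hasFDerivAt (x := f τ)).comp_hasDerivAt τ h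

lemma entry_hasDerivAt {m n : Type*} [Fintype m] [Fintype n]
    {f : ℝ → Matrix m n ℝ} {f' : Matrix m n ℝ} {τ : ℝ}
    (h : HasDerivAt f f' τ) (i : m) (j : n) :
    HasDerivAt (fun u => f u i j) (f' i j) τ := by
  exact hasDerivAt_linear (Matrix.entryLinearMap ℝ ℝ i j) h

variable {m n : Type*}

/-- `toBlocks₁₁` as a linear map. -/
def B₁₁ : Matrix (m ⊕ n) (m ⊕ n) ℝ →ₗ[ℝ] Matrix m m ℝ where
  toFun := Matrix.toBlocks₁₁
  map_add' _ _ := rfl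
  map_smul' _ _ := rfl

def B₁₂ : Matrix (m ⊕ n) (m ⊕ n) ℝ →ₗ[ℝ] Matrix m n ℝ where
  toFun := Matrix.toBlocks₁₂
  map_add' _ _ := rfl
  map_smul' _ _ := rfl

def B₂₁ : Matrix (m ⊕ n) (m ⊕ n) ℝ →ₗ[ℝ] Matrix n m ℝ where
  toFun := Matrix.toBlocks₂₁
  map_add' _ _ := rfl
  map_smul' _ _ := rfl

def B₂₂ : Matrix (m ⊕ n) (m ⊕ n) ℝ →ₗ[ℝ] Matrix n n ℝ where
  toFun := Matrix.toBlocks₂₂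
  map_add' _ _ := rfl
  map_smul' _ _ := rfl

end RiccatiAux

section Main

open RiccatiAux

attribute [local instance] Matrix.linftyOpNormedAddCommGroup Matrix.linftyOpNormedSpace
  Matrix.linftyOpNormedRing Matrix.linftyOpNormedAlgebra

/-- Let `H = [[σ, −κI],[−β, −σᵀ]]` and let `Φᵢⱼ(τ)` be the `d×d`
blocks of `exp(−τH)`. With `X(τ) = Φ₁₁(τ) + Φ₁₂(τ)A₁` and `Y(τ) = Φ₂₁(τ) + Φ₂₂(τ)A₁`,
on any interval containing `0` on which `X(τ)` is invertible, `A(τ) := Y(τ)X(τ)⁻¹`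
is differentiable, satisfies `A(0) = A₁`, and solves the matrix Riccati equation
`A'(τ) = β + σᵀA + Aσ − κA²`. -/
theorem riccati_solution_from_block_matrix_exponential
    (d : ℕ) (σ β A₁ : Matrix (Fin d) (Fin d) ℝ) (κ : ℝ)
    (H : Matrix (Fin d ⊕ Fin d) (Fin d ⊕ Fin d) ℝ)
    (hH : H = Matrix.fromBlocks σ (-(κ • (1 : Matrix (Fin d) (Fin d) ℝ)))
      (-β) (-σ.transpose))
    (Φ₁₁ Φ₁₂ Φ₂₁ Φ₂₂ : ℝ → Matrix (Fin d) (Fin d) ℝ)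
    (hΦ₁₁ : ∀ τ : ℝ, Φ₁₁ τ = (NormedSpace.exp (-(τ • H))).toBlocks₁₁)
    (hΦ₁₂ : ∀ τ : ℝ, Φ₁₂ τ = (NormedSpace.exp (-(τ • H))).toBlocks₁₂)
    (hΦ₂₁ : ∀ τ : ℝ, Φ₂₁ τ = (NormedSpace.exp (-(τ • H))).toBlocks₂₁)
    (hΦ₂₂ : ∀ τ : ℝ, Φ₂₂ τ = (NormedSpace.exp (-(τ • H))).toBlocks₂₂)
    (X Y : ℝ → Matrix (Fin d) (Fin d) ℝ)
    (hX : X = fun τ => Φ₁₁ τ + Φ₁₂ τ * A₁)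
    (hY : Y = fun τ => Φ₂₁ τ + Φ₂₂ τ * A₁)
    (s : Set ℝ) (hs : s.OrdConnected) (h0 : (0 : ℝ) ∈ s)
    (hinv : ∀ τ ∈ s, IsUnit (X τ))
    (A : ℝ → Matrix (Fin d) (Fin d) ℝ)
    (hA : A = fun τ => Y τ * (X τ)⁻¹) :
    A 0 = A₁ ∧
    ∀ τ ∈ s, ∀ i j, HasDerivAt (fun u => A u i j)
      ((β + σ.transpose * A τ + A τ * σ - κ • (A τ * A τ)) i j) τ := by
  set E : ℝ → Matrix (Fin d ⊕ Fin d) (Fin d ⊕ Fin d) ℝ := fun u => NormedSpace.exp (-(u • H)) with hE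
  -- exp derivative
  have hEd : ∀ τ : ℝ, HasDerivAt E ((-H) * E τ) τ := by
    intro τ
    have h := hasDerivAt_exp_smul_const' (𝕂 := ℝ) (-H) τ
    simp [hE, smul_neg] at h ⊢; exact h
  -- X, Y in terms of E
  have hXE : ∀ u : ℝ, X u = (E u).toBlocks₁₁ + (E u).toBlocks₁₂ * A₁ := by
    intro u; simp only [hX, hΦ₁₁, hΦ₁₂, hE]
  have hYE : ∀ u : ℝ, Y u = (E u).toBlocks₂₁ + (E u).toBlocks₂₂ * A₁ := by
    intro u; simp only [hY, hΦ₂₁, hΦ₂₂, hE]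
  -- combined linear maps
  set LX : Matrix (Fin d ⊕ Fin d) (Fin d ⊕ Fin d) ℝ →ₗ[ℝ] Matrix (Fin d) (Fin d) ℝ :=
    B₁₁ + (LinearMap.mulRight ℝ A₁).comp B₁₂ with hLX
  set LY : Matrix (Fin d ⊕ Fin d) (Fin d ⊕ Fin d) ℝ →ₗ[ℝ] Matrix (Fin d) (Fin d) ℝ :=
    B₂₁ + (LinearMap.mulRight ℝ A₁).comp B₂₂ with hLY
  have hLXapp : ∀ M, LX M = M.toBlocks₁₁ + M.toBlocks₁₂ * A₁ := fun M => rfl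
  have hLYapp : ∀ M, LY M = M.toBlocks₂₁ + M.toBlocks₂₂ * A₁ := fun M => rfl
  have hXfun : X = fun u => LX (E u) := by funext u; rw [hXE u, hLXapp]
  have hYfun : Y = fun u => LY (E u) := by funext u; rw [hYE u, hLYapp]
  -- block structure of E τ and -H
  have hEB : ∀ τ : ℝ, E τ = Matrix.fromBlocks (Φ₁₁ τ) (Φ₁₂ τ) (Φ₂₁ τ) (Φ₂₂ τ) := by
    intro τ; rw [hΦ₁₁, hΦ₁₂, hΦ₂₁, hΦ₂₂]; exact (Matrix.fromBlocks_toBlocks _).symm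
  have hmH : -H = Matrix.fromBlocks (-σ) (κ • (1 : Matrix (Fin d) (Fin d) ℝ)) β σ.transpose := by
    rw [hH, Matrix.fromBlocks_neg]; simp
  -- derivatives of X and Y
  have hXd : ∀ τ : ℝ, HasDerivAt X (-σ * X τ + κ • Y τ) τ := by
    intro τ
    have h := hasDerivAt_linear LX (hEd τ)
    rw [← hXfun] at h
    have hval : LX ((-H) * E τ) = -σ * X τ + κ • Y τ := by
      rw [hLXapp, hmH, hEB τ, Matrix.fromBlocks_multiply, Matrix.toBlocks_fromBlocks₁₁,
        Matrix.toBlocks_fromBlocks₁₂, hX, hY]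
      simp only [smul_mul_assoc, one_mul, add_mul, mul_add, neg_mul, smul_add, mul_assoc]
      abel
    rwa [hval] at h
  have hYd : ∀ τ : ℝ, HasDerivAt Y (β * X τ + σ.transpose * Y τ) τ := by
    intro τ
    have h := hasDerivAt_linear LY (hEd τ)
    rw [← hYfun] at h
    have hval : LY ((-H) * E τ) = β * X τ + σ.transpose * Y τ := by
      rw [hLYapp, hmH, hEB τ, Matrix.fromBlocks_multiply, Matrix.toBlocks_fromBlocks₂₁,
        Matrix.toBlocks_fromBlocks₂₂, hX, hY]
      simp only [smul_mul_assoc, one_mul, add_mul, mul_add, neg_mul, smul_add, mul_assoc]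
      abel
    rwa [hval] at h
  -- initial condition
  have hE0 : E 0 = 1 := by simp [hE]
  have hX0 : X 0 = 1 := by
    rw [hXE 0, hE0, ← Matrix.fromBlocks_one, Matrix.toBlocks_fromBlocks₁₁,
      Matrix.toBlocks_fromBlocks₁₂]
    simp
  have hY0 : Y 0 = A₁ := by
    rw [hYE 0, hE0, ← Matrix.fromBlocks_one, Matrix.toBlocks_fromBlocks₂₁,
      Matrix.toBlocks_fromBlocks₂₂]
    simp
  constructor
  · rw [hA]; simp [hX0, hY0]
  · intro τ hτ i j
    obtain ⟨u, hu⟩ := hinv τ hτ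
    have hXiX : X τ * (X τ)⁻¹ = 1 :=
      Matrix.mul_nonsing_inv _ ((Matrix.isUnit_iff_isUnit_det _).mp (hinv τ hτ))
    -- derivative of the inverse
    have hInv : HasDerivAt (fun v => Ring.inverse (X v))
        (-((X τ)⁻¹ * (-σ * X τ + κ • Y τ) * (X τ)⁻¹)) τ := by
      have h1 := hasFDerivAt_ringInverse (𝕜 := ℝ) u
      rw [hu] at h1
      have h2 := h1.comp_hasDerivAt τ (hXd τ).hasFDerivAt
      have h3 : HasDerivAt (fun v => Ring.inverse (X v))
          (-((↑u⁻¹ : Matrix (Fin d) (Fin d) ℝ) * (-σ * X τ + κ • Y τ) * (↑u⁻¹ : Matrix (Fin d) (Fin d) ℝ))) τ := by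
        simp [Function.comp] at h2 ⊢; exact h2
      rwa [Matrix.coe_units_inv, hu] at h3
    have hAfun : A = fun v => Y v * Ring.inverse (X v) := by
      funext v; simp only [hA, Matrix.nonsing_inv_eq_ringInverse]
    have hAd : HasDerivAt A
        ((β * X τ + σ.transpose * Y τ) * Ring.inverse (X τ) +
          Y τ * -((X τ)⁻¹ * (-σ * X τ + κ • Y τ) * (X τ)⁻¹)) τ := by
      rw [hAfun]
      exact (hYd τ).mul hInv
    rw [← Matrix.nonsing_inv_eq_ringInverse] at hAd
    have hval : (β * X τ + σ.transpose * Y τ) * (X τ)⁻¹ +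
        Y τ * -((X τ)⁻¹ * (-σ * X τ + κ • Y τ) * (X τ)⁻¹) =
        β + σ.transpose * A τ + A τ * σ - κ • (A τ * A τ) := by
      rw [hA]
      simp only [mul_add, add_mul, neg_mul, mul_neg, mul_assoc, smul_mul_assoc,
        mul_smul_comm, hXiX, mul_one, neg_neg, sub_eq_add_neg]
      abel
    rw [hval] at hAd
    exact entry_hasDerivAt hAd i j

end Main
end

section
/- Let σ, β, A₁, B₁ be real d×d matrices and κ ∈ ℝ. With H = [[σ, −κ·I],[−β, −σᵀ]], Φᵢⱼ(τ) the d×d blocks of exp(−τ·H), X(τ) = Φ₁₁(τ) + Φ₁₂(τ)·A₁, and Y(τ) = Φ₂₁(τ) + Φ₂₂(τ)·A₁ as before, suppose X(τ) is invertible on an interval containing 0, and set A(τ) = Y(τ)·X(τ)⁻¹. Then the function B(τ) := (X(τ)⁻¹)ᵀ·B₁ is differentiable, satisfies B(0) = B₁, and solves the linear matrix ODE B'(τ) = σᵀ·B(τ) − κ·A(τ)ᵀ·B(τ). -/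
section AuxLCB

attribute [local instance] Matrix.linftyOpNormedRing Matrix.linftyOpNormedAlgebra

open NormedSpace Matrix

variable {d : ℕ}

private noncomputable def entryCLM (n : Type*) [Fintype n] [DecidableEq n] (i j : n) :
    Matrix n n ℝ →L[ℝ] ℝ :=
  LinearMap.toContinuousLinearMap
    { toFun := fun M => M i j
      map_add' := fun _ _ => rfl
      map_smul' := fun _ _ => rfl }

private theorem hasDerivAt_entry {n : Type*} [Fintype n] [DecidableEq n]
    {f : ℝ → Matrix n n ℝ} {f' : Matrix n n ℝ} {τ : ℝ}
    (h : HasDerivAt f f' τ) (i j : n) :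
    HasDerivAt (fun u => f u i j) (f' i j) τ := by
  exact (entryCLM n i j).hasFDerivAt.comp_hasDerivAt τ h

private theorem matrix_inverse_hasFDerivAt {X : Matrix (Fin d) (Fin d) ℝ} (h : IsUnit X) :
    HasFDerivAt (Ring.inverse (M₀ := Matrix (Fin d) (Fin d) ℝ))
      (-(ContinuousLinearMap.mulLeftRight ℝ _ X⁻¹ X⁻¹)) X := by
  have hc : (↑h.unit⁻¹ : Matrix (Fin d) (Fin d) ℝ) = X⁻¹ := by
    rw [Matrix.nonsing_inv_eq_ringInverse]
    conv_rhs => rw [← h.unit_spec]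
    rw [Ring.inverse_unit]
  have := hasFDerivAt_ringInverse (𝕜 := ℝ) h.unit
  rw [hc] at this
  simpa [h.unit_spec] using this

-- blocks of a product with a block matrix on the left
private theorem toBlocks₁₁_fromBlocks_mul (P Q R S : Matrix (Fin d) (Fin d) ℝ)
    (M : Matrix (Fin d ⊕ Fin d) (Fin d ⊕ Fin d) ℝ) :
    (Matrix.fromBlocks P Q R S * M).toBlocks₁₁ = P * M.toBlocks₁₁ + Q * M.toBlocks₂₁ := by
  conv_lhs => rw [← M.fromBlocks_toBlocks, Matrix.fromBlocks_multiply,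
    Matrix.toBlocks_fromBlocks₁₁]

private theorem toBlocks₁₂_fromBlocks_mul (P Q R S : Matrix (Fin d) (Fin d) ℝ)
    (M : Matrix (Fin d ⊕ Fin d) (Fin d ⊕ Fin d) ℝ) :
    (Matrix.fromBlocks P Q R S * M).toBlocks₁₂ = P * M.toBlocks₁₂ + Q * M.toBlocks₂₂ := by
  conv_lhs => rw [← M.fromBlocks_toBlocks, Matrix.fromBlocks_multiply,
    Matrix.toBlocks_fromBlocks₁₂]

private noncomputable def clmX (A₁ : Matrix (Fin d) (Fin d) ℝ) :
    Matrix (Fin d ⊕ Fin d) (Fin d ⊕ Fin d) ℝ →L[ℝ] Matrix (Fin d) (Fin d) ℝ :=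
  LinearMap.toContinuousLinearMap
    { toFun := fun M => M.toBlocks₁₁ + M.toBlocks₁₂ * A₁
      map_add' := fun M N => by
        have h1 : (M + N).toBlocks₁₁ = M.toBlocks₁₁ + N.toBlocks₁₁ := rfl
        have h2 : (M + N).toBlocks₁₂ = M.toBlocks₁₂ + N.toBlocks₁₂ := rfl
        rw [h1, h2, Matrix.add_mul]
        abel
      map_smul' := fun c M => by
        have h1 : (c • M).toBlocks₁₁ = c • M.toBlocks₁₁ := rfl
        have h2 : (c • M).toBlocks₁₂ = c • M.toBlocks₁₂ := rfl
        rw [h1, h2, Matrix.smul_mul, smul_add]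
        rfl }

private theorem clmX_apply (A₁ : Matrix (Fin d) (Fin d) ℝ)
    (M : Matrix (Fin d ⊕ Fin d) (Fin d ⊕ Fin d) ℝ) :
    clmX A₁ M = M.toBlocks₁₁ + M.toBlocks₁₂ * A₁ := rfl

private noncomputable def clmB (B₁ : Matrix (Fin d) (Fin d) ℝ) :
    Matrix (Fin d) (Fin d) ℝ →L[ℝ] Matrix (Fin d) (Fin d) ℝ :=
  LinearMap.toContinuousLinearMap
    { toFun := fun M => M.transpose * B₁
      map_add' := fun M N => by rw [Matrix.transpose_add, Matrix.add_mul]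
      map_smul' := fun c M => by rw [Matrix.transpose_smul, Matrix.smul_mul]; rfl }

private theorem clmB_apply (B₁ M : Matrix (Fin d) (Fin d) ℝ) :
    clmB B₁ M = M.transpose * B₁ := rfl


private theorem aux_main
    (d : ℕ) (σ β A₁ B₁ : Matrix (Fin d) (Fin d) ℝ) (κ : ℝ)
    (H : Matrix (Fin d ⊕ Fin d) (Fin d ⊕ Fin d) ℝ)
    (hH : H = Matrix.fromBlocks σ (-(κ • (1 : Matrix (Fin d) (Fin d) ℝ)))
      (-β) (-σ.transpose))
    (Φ₁₁ Φ₁₂ Φ₂₁ Φ₂₂ : ℝ → Matrix (Fin d) (Fin d) ℝ)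
    (hΦ₁₁ : ∀ τ : ℝ, Φ₁₁ τ = (NormedSpace.exp (-(τ • H))).toBlocks₁₁)
    (hΦ₁₂ : ∀ τ : ℝ, Φ₁₂ τ = (NormedSpace.exp (-(τ • H))).toBlocks₁₂)
    (hΦ₂₁ : ∀ τ : ℝ, Φ₂₁ τ = (NormedSpace.exp (-(τ • H))).toBlocks₂₁)
    (hΦ₂₂ : ∀ τ : ℝ, Φ₂₂ τ = (NormedSpace.exp (-(τ • H))).toBlocks₂₂)
    (X Y : ℝ → Matrix (Fin d) (Fin d) ℝ)
    (hX : X = fun τ => Φ₁₁ τ + Φ₁₂ τ * A₁)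
    (hY : Y = fun τ => Φ₂₁ τ + Φ₂₂ τ * A₁)
    (s : Set ℝ) (hs : s.OrdConnected) (h0 : (0 : ℝ) ∈ s)
    (hinv : ∀ τ ∈ s, IsUnit (X τ))
    (A : ℝ → Matrix (Fin d) (Fin d) ℝ) (hA : A = fun τ => Y τ * (X τ)⁻¹)
    (B : ℝ → Matrix (Fin d) (Fin d) ℝ) (hB : B = fun τ => ((X τ)⁻¹).transpose * B₁) :
    B 0 = B₁ ∧
    ∀ τ ∈ s, ∀ i j, HasDerivAt (fun u => B u i j)
      ((σ.transpose * B τ - κ • ((A τ).transpose * B τ)) i j) τ := by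
  have hsmul : ∀ u : ℝ, -(u • H) = u • (-H) := fun u => (smul_neg u H).symm
  set E : ℝ → Matrix (Fin d ⊕ Fin d) (Fin d ⊕ Fin d) ℝ :=
    fun u => NormedSpace.exp (u • (-H)) with hEdef
  have hXE : ∀ u, X u = (E u).toBlocks₁₁ + (E u).toBlocks₁₂ * A₁ := by
    intro u; rw [hX]; dsimp only; rw [hΦ₁₁, hΦ₁₂, hsmul]
  have hYE : ∀ u, Y u = (E u).toBlocks₂₁ + (E u).toBlocks₂₂ * A₁ := by
    intro u; rw [hY]; dsimp only; rw [hΦ₂₁, hΦ₂₂, hsmul]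
  have hE0 : E 0 = 1 := by
    rw [hEdef]; dsimp only; rw [zero_smul, NormedSpace.exp_zero]
  have hX0 : X 0 = 1 := by
    rw [hXE, hE0, ← Matrix.fromBlocks_one, Matrix.toBlocks_fromBlocks₁₁,
      Matrix.toBlocks_fromBlocks₁₂, Matrix.zero_mul, add_zero]
  have hB0 : B 0 = B₁ := by
    rw [hB]; dsimp only
    rw [hX0]
    simp
  refine ⟨hB0, ?_⟩
  have hN : (-H) = Matrix.fromBlocks (-σ) (κ • (1 : Matrix (Fin d) (Fin d) ℝ))
      β σ.transpose := by
    rw [hH, Matrix.fromBlocks_neg, neg_neg, neg_neg, neg_neg]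
  have hEd : ∀ u, HasDerivAt E ((-H) * E u) u := fun u =>
    hasDerivAt_exp_smul_const' (-H) u
  have hXd : ∀ u, HasDerivAt X (κ • Y u - σ * X u) u := by
    intro u
    have h1 : HasDerivAt (fun v => clmX A₁ (E v)) (clmX A₁ ((-H) * E u)) u :=
      (clmX A₁).hasFDerivAt.comp_hasDerivAt u (hEd u)
    have h2 : (fun v => clmX A₁ (E v)) = X := by
      funext v; rw [hXE v, clmX_apply]
    have h3 : clmX A₁ ((-H) * E u) = κ • Y u - σ * X u := by
      rw [clmX_apply, hN, toBlocks₁₁_fromBlocks_mul, toBlocks₁₂_fromBlocks_mul,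
        hXE u, hYE u]
      simp only [Matrix.neg_mul, Matrix.smul_mul, Matrix.one_mul, Matrix.add_mul,
        Matrix.mul_add, smul_add, sub_eq_add_neg, neg_add, Matrix.mul_assoc]
      abel
    exact h3 ▸ h2 ▸ h1
  intro τ hτ i j
  have hu : IsUnit (X τ) := hinv τ hτ
  have hdet : IsUnit (X τ).det := (Matrix.isUnit_iff_isUnit_det _).mp hu
  have hXXi : X τ * (X τ)⁻¹ = 1 := Matrix.mul_nonsing_inv _ hdet
  have hZ : HasDerivAt (fun u => Ring.inverse (X u))
      (-((X τ)⁻¹ * (κ • Y τ - σ * X τ) * (X τ)⁻¹)) τ := by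
    have := (matrix_inverse_hasFDerivAt hu).comp_hasDerivAt τ (hXd τ)
    simp at this
    exact this
  have hBfun : B = fun u => clmB B₁ (Ring.inverse (X u)) := by
    funext u; rw [hB]; dsimp only
    rw [clmB_apply, Matrix.nonsing_inv_eq_ringInverse]
  have hBd : HasDerivAt B (clmB B₁ (-((X τ)⁻¹ * (κ • Y τ - σ * X τ) * (X τ)⁻¹))) τ := by
    rw [hBfun]
    exact (clmB B₁).hasFDerivAt.comp_hasDerivAt τ hZ
  have hval : clmB B₁ (-((X τ)⁻¹ * (κ • Y τ - σ * X τ) * (X τ)⁻¹))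
      = σ.transpose * B τ - κ • ((A τ).transpose * B τ) := by
    have key : -((X τ)⁻¹ * (κ • Y τ - σ * X τ) * (X τ)⁻¹)
        = (X τ)⁻¹ * σ - κ • ((X τ)⁻¹ * Y τ * (X τ)⁻¹) := by
      rw [Matrix.mul_sub, Matrix.sub_mul, neg_sub]
      congr 1
      · calc (X τ)⁻¹ * (σ * X τ) * (X τ)⁻¹
            = (X τ)⁻¹ * σ * (X τ * (X τ)⁻¹) := by
              rw [Matrix.mul_assoc, Matrix.mul_assoc, Matrix.mul_assoc]
          _ = (X τ)⁻¹ * σ := by rw [hXXi, Matrix.mul_one]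
      · rw [Matrix.mul_smul, Matrix.smul_mul]
    rw [clmB_apply, key, hB, hA]
    dsimp only
    rw [Matrix.transpose_sub, Matrix.transpose_smul, Matrix.sub_mul, Matrix.smul_mul]
    simp [Matrix.transpose_mul, Matrix.mul_assoc]
  exact hasDerivAt_entry (hval ▸ hBd) i j

end AuxLCB


/-- With `H = [[σ, −κI],[−β, −σᵀ]]`, `Φᵢⱼ(τ)` the `d×d` blocks of
`exp(−τH)`, `X(τ) = Φ₁₁(τ) + Φ₁₂(τ)A₁`, `Y(τ) = Φ₂₁(τ) + Φ₂₂(τ)A₁`, and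
`A(τ) = Y(τ)X(τ)⁻¹`, if `X(τ)` is invertible on an interval containing `0`, then
`B(τ) := (X(τ)⁻¹)ᵀ B₁` is differentiable, satisfies `B(0) = B₁`, and solves the
linear matrix ODE `B'(τ) = σᵀB(τ) − κA(τ)ᵀB(τ)`. -/
theorem linear_coefficient_from_block_matrix_exponential
    (d : ℕ) (σ β A₁ B₁ : Matrix (Fin d) (Fin d) ℝ) (κ : ℝ)
    (H : Matrix (Fin d ⊕ Fin d) (Fin d ⊕ Fin d) ℝ)
    (hH : H = Matrix.fromBlocks σ (-(κ • (1 : Matrix (Fin d) (Fin d) ℝ)))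
      (-β) (-σ.transpose))
    (Φ₁₁ Φ₁₂ Φ₂₁ Φ₂₂ : ℝ → Matrix (Fin d) (Fin d) ℝ)
    (hΦ₁₁ : ∀ τ : ℝ, Φ₁₁ τ = (NormedSpace.exp (-(τ • H))).toBlocks₁₁)
    (hΦ₁₂ : ∀ τ : ℝ, Φ₁₂ τ = (NormedSpace.exp (-(τ • H))).toBlocks₁₂)
    (hΦ₂₁ : ∀ τ : ℝ, Φ₂₁ τ = (NormedSpace.exp (-(τ • H))).toBlocks₂₁)
    (hΦ₂₂ : ∀ τ : ℝ, Φ₂₂ τ = (NormedSpace.exp (-(τ • H))).toBlocks₂₂)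
    (X Y : ℝ → Matrix (Fin d) (Fin d) ℝ)
    (hX : X = fun τ => Φ₁₁ τ + Φ₁₂ τ * A₁)
    (hY : Y = fun τ => Φ₂₁ τ + Φ₂₂ τ * A₁)
    (s : Set ℝ) (hs : s.OrdConnected) (h0 : (0 : ℝ) ∈ s)
    (hinv : ∀ τ ∈ s, IsUnit (X τ))
    (A : ℝ → Matrix (Fin d) (Fin d) ℝ) (hA : A = fun τ => Y τ * (X τ)⁻¹)
    (B : ℝ → Matrix (Fin d) (Fin d) ℝ) (hB : B = fun τ => ((X τ)⁻¹).transpose * B₁) :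
    B 0 = B₁ ∧
    ∀ τ ∈ s, ∀ i j, HasDerivAt (fun u => B u i j)
      ((σ.transpose * B τ - κ • ((A τ).transpose * B τ)) i j) τ :=
  aux_main d σ β A₁ B₁ κ H hH Φ₁₁ Φ₁₂ Φ₂₁ Φ₂₂ hΦ₁₁ hΦ₁₂ hΦ₂₁ hΦ₂₂ X Y hX hY
    s hs h0 hinv A hA B hB
end

section
/- Let d ≥ 1, κ > 0, let V : ℝ^d → ℝ, let f : ℝ^d → ℝ^d be continuously differentiable, and let ψ, φ : ℝ × ℝ^d → ℝ be continuously differentiable in time and twice continuously differentiable in space, with ψ everywhere positive. Suppose that at every point: −∂_t ψ + V·ψ = ⟨f, ∇ψ⟩ + (κ/2)·Δψ (ψ solves the backward linearized HJB equation) and ∂_t φ + V·φ = −∇·(f·φ) + (κ/2)·Δφ (φ solves the adjoint forward equation). Then the product q := φ·ψ satisfies the controlled Kolmogorov–Fokker–Planck equation ∂_t q = −∇·((f + κ·∇ log ψ)·q) + (κ/2)·Δq at every point; in particular the potential terms V·φ·ψ cancel in the product. -/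
open scoped RealInnerProductSpace

/-- Divergence of a vector field on Euclidean space: sum of the `i`-th components of
the derivatives in the `i`-th coordinate directions. -/
noncomputable def spatialDiv {d : ℕ}
    (w : EuclideanSpace ℝ (Fin d) → EuclideanSpace ℝ (Fin d))
    (x : EuclideanSpace ℝ (Fin d)) : ℝ :=
  ∑ i, fderiv ℝ w x (EuclideanSpace.single i 1) i

section Aux

variable {d : ℕ}

local notation "E" => EuclideanSpace ℝ (Fin d)

lemma gradient_apply_fd (g : E → ℝ) (x : E) (i : Fin d) :
    gradient g x i = fderiv ℝ g x (EuclideanSpace.single i 1) := by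
  have h : gradient g x i = ⟪gradient g x, (EuclideanSpace.single i (1:ℝ))⟫ := by
    rw [EuclideanSpace.inner_single_right]; simp
  rw [h, gradient, InnerProductSpace.toDual_symm_apply]

lemma diff_pderiv {g : E → ℝ} (hg : ContDiff ℝ 2 g) (v : E) :
    Differentiable ℝ (fun y => fderiv ℝ g y v) := by
  have h1 : ContDiff ℝ 1 (fderiv ℝ g) := hg.fderiv_right (by norm_num)
  exact fun y => (ContinuousLinearMap.apply ℝ ℝ v).differentiableAt.comp y
    (h1.differentiable one_ne_zero y)

lemma fderiv_comp_proj (u : E → E) (x : E) (hu : DifferentiableAt ℝ u x) (i : Fin d) (v : E) :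
    fderiv ℝ (fun y => u y i) x v = fderiv ℝ u x v i := by
  have h := ((EuclideanSpace.proj i : E →L[ℝ] ℝ).hasFDerivAt.comp x hu.hasFDerivAt).fderiv
  have h2 : (fun y => u y i) = fun y => (EuclideanSpace.proj i : E →L[ℝ] ℝ) (u y) := by
    funext y; simp
  rw [h2]
  rw [show (fun y => (EuclideanSpace.proj i : E →L[ℝ] ℝ) (u y))
      = (EuclideanSpace.proj i : E →L[ℝ] ℝ) ∘ u from rfl, h]
  simp

lemma spatialDiv_add (u v : E → E) (x : E)
    (hu : DifferentiableAt ℝ u x) (hv : DifferentiableAt ℝ v x) :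
    spatialDiv (fun y => u y + v y) x = spatialDiv u x + spatialDiv v x := by
  simp only [spatialDiv]
  rw [← Finset.sum_add_distrib]
  refine Finset.sum_congr rfl fun i _ => ?_
  rw [fderiv_fun_add hu hv]
  simp

lemma spatialDiv_smul (c : E → ℝ) (w : E → E) (x : E)
    (hc : DifferentiableAt ℝ c x) (hw : DifferentiableAt ℝ w x) :
    spatialDiv (fun y => c y • w y) x
      = (∑ i, fderiv ℝ c x (EuclideanSpace.single i 1) * w x i) + c x * spatialDiv w x := by
  simp only [spatialDiv]
  rw [Finset.mul_sum, ← Finset.sum_add_distrib]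
  refine Finset.sum_congr rfl fun i _ => ?_
  rw [fderiv_fun_smul hc hw]
  simp [mul_comm]
  ring

/-- The "coordinate form" of the gradient vector field. -/
noncomputable def gradField (g : E → ℝ) : E → E :=
  fun y => ∑ j, fderiv ℝ g y (EuclideanSpace.single j 1) • (EuclideanSpace.single j 1 : E)

lemma gradField_apply (g : E → ℝ) (y : E) (i : Fin d) :
    gradField g y i = fderiv ℝ g y (EuclideanSpace.single i 1) := by
  simp only [gradField]
  rw [WithLp.ofLp_sum, Finset.sum_apply]
  simp [EuclideanSpace.single_apply]

lemma gradient_eq_gradField (g : E → ℝ) (y : E) : gradient g y = gradField g y := by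
  ext i
  rw [gradient_apply_fd, gradField_apply]

lemma diff_gradField {g : E → ℝ} (hg : ContDiff ℝ 2 g) :
    Differentiable ℝ (gradField g) := by
  refine Differentiable.fun_sum fun j _ => ?_
  exact (diff_pderiv hg _).smul_const _

lemma spatialDiv_gradField {g : E → ℝ} (hg : ContDiff ℝ 2 g) (x : E) :
    spatialDiv (gradField g) x = spatialLaplacian g x := by
  simp only [spatialDiv, spatialLaplacian]
  refine Finset.sum_congr rfl fun i _ => ?_
  rw [← fderiv_comp_proj _ x (diff_gradField hg x)]
  have hfun : (fun y => gradField g y i)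
      = fun y => fderiv ℝ g y (EuclideanSpace.single i 1) := by
    funext y; rw [gradField_apply]
  rw [hfun]

lemma lap_mul {a b : E → ℝ} (ha : ContDiff ℝ 2 a) (hb : ContDiff ℝ 2 b) (x : E) :
    spatialLaplacian (fun y => a y * b y) x
      = a x * spatialLaplacian b x + b x * spatialLaplacian a x
        + 2 * ∑ i, fderiv ℝ a x (EuclideanSpace.single i 1)
            * fderiv ℝ b x (EuclideanSpace.single i 1) := by
  have hda : Differentiable ℝ a := ha.differentiable (by norm_num)
  have hdb : Differentiable ℝ b := hb.differentiable (by norm_num)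
  have key : ∀ i : Fin d,
      fderiv ℝ (fun y => fderiv ℝ (fun z => a z * b z) y (EuclideanSpace.single i 1)) x
          (EuclideanSpace.single i 1)
        = a x * fderiv ℝ (fun y => fderiv ℝ b y (EuclideanSpace.single i 1)) x
              (EuclideanSpace.single i 1)
          + b x * fderiv ℝ (fun y => fderiv ℝ a y (EuclideanSpace.single i 1)) x
              (EuclideanSpace.single i 1)
          + 2 * (fderiv ℝ a x (EuclideanSpace.single i 1)
              * fderiv ℝ b x (EuclideanSpace.single i 1)) := by
    intro i
    have h1 : (fun y => fderiv ℝ (fun z => a z * b z) y (EuclideanSpace.single i 1))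
        = fun y => a y * fderiv ℝ b y (EuclideanSpace.single i 1)
            + b y * fderiv ℝ a y (EuclideanSpace.single i 1) := by
      funext y
      rw [fderiv_fun_mul (hda y) (hdb y)]
      simp [mul_comm]
    rw [h1, fderiv_fun_add ((hda x).fun_mul ((diff_pderiv hb _) x))
      ((hdb x).fun_mul ((diff_pderiv ha _) x)),
      fderiv_fun_mul (hda x) ((diff_pderiv hb _) x),
      fderiv_fun_mul (hdb x) ((diff_pderiv ha _) x)]
    simp only [ContinuousLinearMap.add_apply, ContinuousLinearMap.coe_smul', Pi.smul_apply,
      ContinuousLinearMap.smulRight_apply, smul_eq_mul]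
    ring
  simp only [spatialLaplacian]
  rw [Finset.sum_congr rfl fun i _ => key i]
  rw [Finset.sum_add_distrib, Finset.sum_add_distrib, ← Finset.mul_sum, ← Finset.mul_sum,
    ← Finset.mul_sum]

lemma inner_expand (v : E) (g : E → ℝ) (x : E) :
    (⟪v, gradient g x⟫ : ℝ) = ∑ i, v i * fderiv ℝ g x (EuclideanSpace.single i 1) := by
  rw [PiLp.inner_apply]
  refine Finset.sum_congr rfl fun i _ => ?_
  rw [gradient_apply_fd]
  simp
  ring

lemma gradient_log {b : E → ℝ} (y : E) (hb : DifferentiableAt ℝ b y) (hby : b y ≠ 0) :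
    gradient (fun y' => Real.log (b y')) y = (b y)⁻¹ • gradient b y := by
  have hfd : HasFDerivAt (fun y' => Real.log (b y')) ((b y)⁻¹ • fderiv ℝ b y) y :=
    (Real.hasDerivAt_log hby).comp_hasFDerivAt y hb.hasFDerivAt
  ext i
  rw [gradient_apply_fd, hfd.fderiv]
  simp only [PiLp.smul_apply, smul_eq_mul, ContinuousLinearMap.coe_smul', Pi.smul_apply]
  rw [gradient_apply_fd]

end Aux

/-- If `ψ > 0` solves the backward linearized HJB equation
`−∂ₜψ + Vψ = ⟨f, ∇ψ⟩ + (κ/2)Δψ` and `φ` solves the adjoint forward equation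
`∂ₜφ + Vφ = −∇·(fφ) + (κ/2)Δφ`, then the product `q := φψ` satisfies the controlled
Kolmogorov–Fokker–Planck equation `∂ₜq = −∇·((f + κ∇log ψ)q) + (κ/2)Δq` at every
point (the potential terms `Vφψ` cancel in the product). -/
theorem product_of_backward_and_forward_solves_fpk
    (d : ℕ) (hd : 1 ≤ d) (κ : ℝ) (hκ : 0 < κ)
    (V : EuclideanSpace ℝ (Fin d) → ℝ)
    (f : EuclideanSpace ℝ (Fin d) → EuclideanSpace ℝ (Fin d))
    (hf : ContDiff ℝ 1 f)
    (ψ φ : ℝ × EuclideanSpace ℝ (Fin d) → ℝ)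
    -- ψ, φ continuously differentiable in time:
    (hψt : ∀ x, ContDiff ℝ 1 (fun t => ψ (t, x)))
    (hφt : ∀ x, ContDiff ℝ 1 (fun t => φ (t, x)))
    -- ψ, φ twice continuously differentiable in space:
    (hψx : ∀ t, ContDiff ℝ 2 (fun x => ψ (t, x)))
    (hφx : ∀ t, ContDiff ℝ 2 (fun x => φ (t, x)))
    (hψpos : ∀ p, 0 < ψ p)
    -- ψ solves the backward linearized HJB equation:
    (hψpde : ∀ t x,
      -(deriv (fun s => ψ (s, x)) t) + V x * ψ (t, x)
        = ⟪f x, gradient (fun y => ψ (t, y)) x⟫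
          + κ / 2 * spatialLaplacian (fun y => ψ (t, y)) x)
    -- φ solves the adjoint forward equation:
    (hφpde : ∀ t x,
      deriv (fun s => φ (s, x)) t + V x * φ (t, x)
        = -(spatialDiv (fun y => φ (t, y) • f y) x)
          + κ / 2 * spatialLaplacian (fun y => φ (t, y)) x)
    (q : ℝ × EuclideanSpace ℝ (Fin d) → ℝ)
    (hq : q = fun p => φ p * ψ p) :
    ∀ t x,
      deriv (fun s => q (s, x)) t
        = -(spatialDiv (fun y => q (t, y) •
              (f y + κ • gradient (fun y' => Real.log (ψ (t, y'))) y)) x)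
          + κ / 2 * spatialLaplacian (fun y => q (t, y)) x := by
  intro t x
  subst hq
  have ha : ContDiff ℝ 2 (fun y => φ (t, y)) := hφx t
  have hb : ContDiff ℝ 2 (fun y => ψ (t, y)) := hψx t
  have hda : Differentiable ℝ (fun y => φ (t, y)) := ha.differentiable (by norm_num)
  have hdb : Differentiable ℝ (fun y => ψ (t, y)) := hb.differentiable (by norm_num)
  have hdf : Differentiable ℝ f := hf.differentiable one_ne_zero
  show deriv (fun s => φ (s, x) * ψ (s, x)) t
      = -(spatialDiv (fun y => (φ (t, y) * ψ (t, y)) •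
            (f y + κ • gradient (fun y' => Real.log (ψ (t, y'))) y)) x)
        + κ / 2 * spatialLaplacian (fun y => φ (t, y) * ψ (t, y)) x
  -- time derivative of the product
  have hT : deriv (fun s => φ (s, x) * ψ (s, x)) t
      = deriv (fun s => φ (s, x)) t * ψ (t, x) + φ (t, x) * deriv (fun s => ψ (s, x)) t :=
    deriv_fun_mul ((hφt x).differentiable one_ne_zero t) ((hψt x).differentiable one_ne_zero t)
  -- rewrite the drift vector field
  have hfield : (fun y => (φ (t, y) * ψ (t, y)) •
        (f y + κ • gradient (fun y' => Real.log (ψ (t, y'))) y))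
      = fun y => (φ (t, y) * ψ (t, y)) • f y
          + (κ * φ (t, y)) • gradField (fun z => ψ (t, z)) y := by
    funext y
    have hne : ψ (t, y) ≠ 0 := ne_of_gt (hψpos (t, y))
    have hgl : gradient (fun y' => Real.log (ψ (t, y'))) y
        = (ψ (t, y))⁻¹ • gradient (fun z => ψ (t, z)) y := gradient_log y (hdb y) hne
    rw [hgl, ← gradient_eq_gradField, smul_smul, smul_add, smul_smul]
    have hc : φ (t, y) * ψ (t, y) * (κ * (ψ (t, y))⁻¹) = κ * φ (t, y) := by
      field_simp
    rw [hc]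
  rw [hfield]
  have hGb : Differentiable ℝ (gradField (fun z => ψ (t, z))) := diff_gradField hb
  have hu1 : DifferentiableAt ℝ (fun y => (φ (t, y) * ψ (t, y)) • f y) x :=
    ((hda x).mul (hdb x)).smul (hdf x)
  have hu2 : DifferentiableAt ℝ
      (fun y => (κ * φ (t, y)) • gradField (fun z => ψ (t, z)) y) x :=
    ((differentiableAt_const κ).mul (hda x)).smul (hGb x)
  rw [spatialDiv_add _ _ x hu1 hu2,
    spatialDiv_smul _ _ x ((hda x).fun_mul (hdb x)) (hdf x),
    spatialDiv_smul _ _ x ((differentiableAt_const κ).fun_mul (hda x)) (hGb x),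
    spatialDiv_gradField hb x]
  -- expand the two sums
  have hS1 : ∑ i, fderiv ℝ (fun y => φ (t, y) * ψ (t, y)) x (EuclideanSpace.single i 1) * f x i
      = ψ (t, x) * (∑ i, fderiv ℝ (fun y => φ (t, y)) x (EuclideanSpace.single i 1) * f x i)
        + φ (t, x) * (∑ i, f x i * fderiv ℝ (fun y => ψ (t, y)) x (EuclideanSpace.single i 1)) := by
    rw [Finset.mul_sum, Finset.mul_sum, ← Finset.sum_add_distrib]
    refine Finset.sum_congr rfl fun i _ => ?_
    rw [fderiv_fun_mul (hda x) (hdb x)]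
    simp only [ContinuousLinearMap.add_apply, ContinuousLinearMap.coe_smul', Pi.smul_apply,
      smul_eq_mul]
    ring
  have hS2 : ∑ i, fderiv ℝ (fun y => κ * φ (t, y)) x (EuclideanSpace.single i 1)
        * gradField (fun z => ψ (t, z)) x i
      = κ * ∑ i, fderiv ℝ (fun y => φ (t, y)) x (EuclideanSpace.single i 1)
          * fderiv ℝ (fun y => ψ (t, y)) x (EuclideanSpace.single i 1) := by
    rw [Finset.mul_sum]
    refine Finset.sum_congr rfl fun i _ => ?_
    rw [gradField_apply, fderiv_const_mul (hda x) κ]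
    simp only [ContinuousLinearMap.coe_smul', Pi.smul_apply, smul_eq_mul]
    ring
  rw [hT, hS1, hS2, lap_mul ha hb x]
  -- the two PDEs, in expanded form
  have hPDEφ := hφpde t x
  rw [spatialDiv_smul _ _ x (hda x) (hdf x)] at hPDEφ
  have hPDEψ := hψpde t x
  rw [inner_expand (f x) (fun y => ψ (t, y)) x] at hPDEψ
  have hAt : deriv (fun s => φ (s, x)) t
      = -(V x * φ (t, x))
        - ((∑ i, fderiv ℝ (fun y => φ (t, y)) x (EuclideanSpace.single i 1) * f x i)
          + φ (t, x) * spatialDiv f x)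
        + κ / 2 * spatialLaplacian (fun y => φ (t, y)) x := by linarith
  have hBt : deriv (fun s => ψ (s, x)) t
      = V x * ψ (t, x)
        - (∑ i, f x i * fderiv ℝ (fun y => ψ (t, y)) x (EuclideanSpace.single i 1))
        - κ / 2 * spatialLaplacian (fun y => ψ (t, y)) x := by linarith
  rw [hAt, hBt]
  ring
end
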